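/- Bound on the sup-norm estimation error of lasso under a nearly orthogonal design (Theorem 3.2, part 2): Assume β0 and s are defined by the oracle program, 1 ≤ s, s < min(p,n), c > 1, c̄ = (c+1)/(c−1), λ > 0, and λ ≥ c·n·‖S‖_∞. Suppose there is a constant U > 5c̄ such that |(1/n)∑_{i} x_{ij}x_{ik}| ≤ 1/(U·s) for all 1 ≤ j < k ≤ p. Then any lasso estimator β̂ satisfies max_{1≤j≤p}|β̂_j − β0_j| ≤ (λ/n)·(U + c̄)/(U − 5c̄) + min{σ/√n, c_s} + (6c̄/(U − 5c̄))·c_s/√s + (4c̄/U)·(n/λ)·c_s²/s. -/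

import Mathlib

open Finset MeasureTheory ProbabilityTheory

noncomputable section

/-- Prediction norm `‖δ‖_{2,n} = ((1/n) ∑_i (x_i'δ)²)^{1/2}`. -/
def predNorm (n p : ℕ) (x : Fin n → Fin p → ℝ) (δ : Fin p → ℝ) : ℝ :=
  Real.sqrt ((n : ℝ)⁻¹ * ∑ i, (∑ j, x i j * δ j) ^ 2)

/-- Least-squares criterion `Q̂(β) = (1/n) ∑_i (y_i - x_i'β)²`. -/
def Qls (n p : ℕ) (x : Fin n → Fin p → ℝ) (y : Fin n → ℝ) (β : Fin p → ℝ) : ℝ :=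
  (n : ℝ)⁻¹ * ∑ i, (y i - ∑ j, x i j * β j) ^ 2

/-- ℓ1-norm on `ℝ^p`. -/
def l1 {p : ℕ} (v : Fin p → ℝ) : ℝ := ∑ j, |v j|

/-- sup-norm (max-absolute-coordinate norm) on `ℝ^p`. -/
def supNorm {p : ℕ} (v : Fin p → ℝ) : ℝ := ⨆ j, |v j|

/-- `restr A δ` is `δ` with coordinates outside `A` set to `0`. -/
def restr {p : ℕ} (A : Finset (Fin p)) (δ : Fin p → ℝ) : Fin p → ℝ :=
  fun j => if j ∈ A then δ j else 0

/-- Support of a vector, as a finset. -/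
def suppF {p : ℕ} (v : Fin p → ℝ) : Finset (Fin p) :=
  Finset.univ.filter (fun j => v j ≠ 0)

/-- Restricted eigenvalue `κ(c̄)`. -/
def kappaRE (n p : ℕ) (x : Fin n → Fin p → ℝ) (T : Finset (Fin p)) (cbar : ℝ) : ℝ :=
  sInf {r : ℝ | ∃ δ : Fin p → ℝ, δ ≠ 0 ∧ l1 (restr Tᶜ δ) ≤ cbar * l1 (restr T δ) ∧
    r = Real.sqrt T.card * predNorm n p x δ / l1 (restr T δ)}

/-- Restricted sparse maximal eigenvalue `φ(m)`. -/
def phiRSE (n p : ℕ) (x : Fin n → Fin p → ℝ) (T : Finset (Fin p)) (m : ℕ) : ℝ :=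
  sSup {r : ℝ | ∃ δ : Fin p → ℝ, δ ≠ 0 ∧ (suppF (restr Tᶜ δ)).card ≤ m ∧
    r = (predNorm n p x δ) ^ 2 / ∑ j, δ j ^ 2}

/-- Restricted sparse minimal eigenvalue `κ̃(m)²`. -/
def kappaTildeSq (n p : ℕ) (x : Fin n → Fin p → ℝ) (T : Finset (Fin p)) (m : ℕ) : ℝ :=
  sInf {r : ℝ | ∃ δ : Fin p → ℝ, δ ≠ 0 ∧ (suppF (restr Tᶜ δ)).card ≤ m ∧
    r = (predNorm n p x δ) ^ 2 / ∑ j, δ j ^ 2}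

/-- The condition number `μ(m) = √φ(m)/κ̃(m)`. -/
def muCond (n p : ℕ) (x : Fin n → Fin p → ℝ) (T : Finset (Fin p)) (m : ℕ) : ℝ :=
  Real.sqrt (phiRSE n p x T m) / Real.sqrt (kappaTildeSq n p x T m)

lemma sum_sq_expand {n : ℕ} (A B : Fin n → ℝ) (t : ℝ) :
    ∑ i, (A i - t * B i)^2 = ∑ i, A i^2 - 2*t*∑ i, A i * B i + t^2 * ∑ i, B i^2 := by
  rw [Finset.mul_sum, Finset.mul_sum, ← Finset.sum_sub_distrib, ← Finset.sum_add_distrib]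
  exact Finset.sum_congr rfl (fun i _ => by ring)

lemma sum_ite_single {p : ℕ} (j : Fin p) (a : Fin p → ℝ) (t : ℝ) :
    ∑ k, a k * (if k = j then t else 0) = a j * t := by
  simp [mul_ite, mul_zero]

lemma Q_update (n p : ℕ) (x : Fin n → Fin p → ℝ) (w : Fin n → ℝ) (β : Fin p → ℝ)
    (j : Fin p) (t : ℝ) (hx : (n:ℝ)⁻¹ * ∑ i, x i j ^2 = 1) :
    (n:ℝ)⁻¹ * ∑ i, (w i - ∑ k, x i k * (β k + if k = j then t else 0))^2
      = (n:ℝ)⁻¹ * ∑ i, (w i - ∑ k, x i k * β k)^2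
        - 2*t*((n:ℝ)⁻¹ * ∑ i, (w i - ∑ k, x i k * β k) * x i j) + t^2 := by
  have h1 : ∀ i ∈ Finset.univ, (w i - ∑ k, x i k * (β k + if k = j then t else 0))^2
      = ((w i - ∑ k, x i k * β k) - t * x i j)^2 := by
    intro i _
    congr 1
    have : ∑ k, x i k * (β k + if k = j then t else 0)
        = (∑ k, x i k * β k) + x i j * t := by
      rw [show (fun k => x i k * (β k + if k = j then t else 0))
          = fun k => x i k * β k + x i k * (if k = j then t else 0) from funext (fun k => by ring),
        Finset.sum_add_distrib, sum_ite_single]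
    rw [this]; ring
  rw [Finset.sum_congr rfl h1, sum_sq_expand (fun i => w i - ∑ k, x i k * β k) (fun i => x i j) t]
  have h2 : (n:ℝ)⁻¹ * ∑ i, (x i j)^2 = 1 := hx
  calc (n:ℝ)⁻¹ * (∑ i, (w i - ∑ k, x i k * β k)^2
        - 2*t*∑ i, (w i - ∑ k, x i k * β k) * x i j + t^2 * ∑ i, (x i j)^2)
      = (n:ℝ)⁻¹ * ∑ i, (w i - ∑ k, x i k * β k)^2
        - 2*t*((n:ℝ)⁻¹ * ∑ i, (w i - ∑ k, x i k * β k) * x i j)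
        + t^2 * ((n:ℝ)⁻¹ * ∑ i, (x i j)^2) := by ring
    _ = _ := by rw [h2]; ring

lemma abs_le_of_quad (L g : ℝ) (h : ∀ t : ℝ, 2*t*g ≤ t^2 + L*|t|) : |g| ≤ L/2 := by
  rw [abs_le]
  constructor
  · by_contra hg
    push_neg at hg
    have ht := h (g + L/2)
    rw [abs_of_neg (by linarith)] at ht
    nlinarith
  · by_contra hg
    push_neg at hg
    have ht := h (g - L/2)
    rw [abs_of_pos (by linarith)] at ht
    nlinarith

lemma l1_update_le {p : ℕ} (β : Fin p → ℝ) (j : Fin p) (t : ℝ) :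
    l1 (fun k => β k + if k = j then t else 0) ≤ l1 β + |t| := by
  calc l1 (fun k => β k + if k = j then t else 0)
      = ∑ k, |β k + if k = j then t else 0| := rfl
    _ ≤ ∑ k, (|β k| + if k = j then |t| else 0) :=
        Finset.sum_le_sum (fun k _ => by
          by_cases hk : k = j <;> simp [hk, abs_add_le])
    _ = l1 β + |t| := by rw [Finset.sum_add_distrib]; simp [l1]

lemma kkt (n p : ℕ) (hn : 0 < n) (x : Fin n → Fin p → ℝ) (y : Fin n → ℝ)
    (hx : ∀ j, (n:ℝ)⁻¹ * ∑ i, x i j ^2 = 1) (lam : ℝ) (hlam : 0 < lam)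
    (βhat : Fin p → ℝ)
    (hβhat : ∀ β : Fin p → ℝ,
      Qls n p x y βhat + lam / n * l1 βhat ≤ Qls n p x y β + lam / n * l1 β)
    (j : Fin p) :
    |(n:ℝ)⁻¹ * ∑ i, (y i - ∑ k, x i k * βhat k) * x i j| ≤ lam/(2*n) := by
  have hn' : (0:ℝ) < n := by exact_mod_cast hn
  have key : ∀ t : ℝ, 2*t*((n:ℝ)⁻¹ * ∑ i, (y i - ∑ k, x i k * βhat k) * x i j)
      ≤ t^2 + (lam/n)*|t| := by
    intro t
    have h := hβhat (fun k => βhat k + if k = j then t else 0)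
    have hQ := Q_update n p x y βhat j t (hx j)
    have hl := l1_update_le βhat j t
    have hln : 0 ≤ lam / n := by positivity
    unfold Qls at h
    rw [hQ] at h
    nlinarith [mul_le_mul_of_nonneg_left hl hln]
  have := abs_le_of_quad (lam/n) _ key
  calc |(n:ℝ)⁻¹ * ∑ i, (y i - ∑ k, x i k * βhat k) * x i j| ≤ (lam/n)/2 := this
    _ = lam/(2*n) := by ring

lemma mean_cs (n : ℕ) (A B : Fin n → ℝ) :
    |(n:ℝ)⁻¹ * ∑ i, A i * B i| ≤
      Real.sqrt ((n:ℝ)⁻¹ * ∑ i, A i^2) * Real.sqrt ((n:ℝ)⁻¹ * ∑ i, B i^2) := by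
  have h := Finset.sum_mul_sq_le_sq_mul_sq Finset.univ A B
  have hnn : (0:ℝ) ≤ (n:ℝ)⁻¹ * (n:ℝ)⁻¹ := by positivity
  have h2 : ((n:ℝ)⁻¹ * ∑ i, A i * B i)^2
      ≤ ((n:ℝ)⁻¹ * ∑ i, A i^2) * ((n:ℝ)⁻¹ * ∑ i, B i^2) := by
    calc ((n:ℝ)⁻¹ * ∑ i, A i * B i)^2 = (n:ℝ)⁻¹ * (n:ℝ)⁻¹ * (∑ i, A i * B i)^2 := by ring
      _ ≤ (n:ℝ)⁻¹ * (n:ℝ)⁻¹ * ((∑ i, A i^2) * ∑ i, B i^2) := mul_le_mul_of_nonneg_left h hnn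
      _ = ((n:ℝ)⁻¹ * ∑ i, A i^2) * ((n:ℝ)⁻¹ * ∑ i, B i^2) := by ring
  calc |(n:ℝ)⁻¹ * ∑ i, A i * B i| = Real.sqrt (((n:ℝ)⁻¹ * ∑ i, A i * B i)^2) :=
        (Real.sqrt_sq_eq_abs _).symm
    _ ≤ Real.sqrt (((n:ℝ)⁻¹ * ∑ i, A i^2) * ((n:ℝ)⁻¹ * ∑ i, B i^2)) := Real.sqrt_le_sqrt h2
    _ = _ := Real.sqrt_mul (by positivity) _

lemma mean_inner_swap (n p : ℕ) (x : Fin n → Fin p → ℝ) (w : Fin n → ℝ) (δ : Fin p → ℝ) :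
    (n:ℝ)⁻¹ * ∑ i, w i * (∑ k, x i k * δ k) = ∑ k, δ k * ((n:ℝ)⁻¹ * ∑ i, w i * x i k) := by
  calc (n:ℝ)⁻¹ * ∑ i, w i * (∑ k, x i k * δ k)
      = (n:ℝ)⁻¹ * ∑ i, ∑ k, δ k * (w i * x i k) := by
        congr 1
        exact Finset.sum_congr rfl fun i _ => by
          rw [Finset.mul_sum]
          exact Finset.sum_congr rfl fun k _ => by ring
    _ = (n:ℝ)⁻¹ * ∑ k, ∑ i, δ k * (w i * x i k) := by rw [Finset.sum_comm]
    _ = ∑ k, δ k * ((n:ℝ)⁻¹ * ∑ i, w i * x i k) := by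
        rw [Finset.mul_sum]
        exact Finset.sum_congr rfl fun k _ => by rw [← Finset.mul_sum]; ring


set_option maxHeartbeats 1600000 in
/-- Theorem 3.2, part 2: sup-norm estimation error of lasso under a
nearly orthogonal design, with `β0, s` defined by the oracle program. -/
theorem lasso_sup_norm_bound_orthogonal_design
    (n p : ℕ) (hn : 0 < n) (hp : 0 < p)
    (x : Fin n → Fin p → ℝ) (y f : Fin n → ℝ)
    (hx : ∀ j, (n : ℝ)⁻¹ * ∑ i, x i j ^ 2 = 1)
    (σ : ℝ) (hσ : 0 < σ)
    -- the oracle program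
    (ck2 : ℕ → ℝ)
    (hck2 : ∀ k, ck2 k = sInf {r : ℝ | ∃ β : Fin p → ℝ, (suppF β).card ≤ k ∧
      r = (n : ℝ)⁻¹ * ∑ i, (f i - ∑ j, x i j * β j) ^ 2})
    (s : ℕ) (hs1 : 1 ≤ s) (hsn : s < min p n)
    (hsopt : ∀ k ≤ min p n, ck2 s + σ ^ 2 * s / n ≤ ck2 k + σ ^ 2 * k / n)
    (hsmin : ∀ k < s, ck2 s + σ ^ 2 * s / n < ck2 k + σ ^ 2 * k / n)
    (β0 : Fin p → ℝ) (hβ0s : (suppF β0).card ≤ s)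
    (hβ0 : ∀ β : Fin p → ℝ, (suppF β).card ≤ s →
      (n : ℝ)⁻¹ * ∑ i, (f i - ∑ j, x i j * β0 j) ^ 2 ≤
        (n : ℝ)⁻¹ * ∑ i, (f i - ∑ j, x i j * β j) ^ 2)
    (T : Finset (Fin p)) (hT : T = suppF β0) (hcard : T.card = s)
    (cs : ℝ) (hcs : cs = Real.sqrt ((n : ℝ)⁻¹ * ∑ i, (f i - ∑ j, x i j * β0 j) ^ 2))
    -- lasso
    (c : ℝ) (hc : 1 < c) (cbar : ℝ) (hcbar : cbar = (c + 1) / (c - 1))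
    (S : Fin p → ℝ) (hS : S = fun j => (2 / n : ℝ) * ∑ i, (y i - f i) * x i j)
    (lam : ℝ) (hlam : 0 < lam) (hlamS : c * n * supNorm S ≤ lam)
    -- nearly orthogonal design
    (U : ℝ) (hU : 5 * cbar < U)
    (horth : ∀ j k : Fin p, j < k → |(n : ℝ)⁻¹ * ∑ i, x i j * x i k| ≤ 1 / (U * s))
    (βhat : Fin p → ℝ)
    (hβhat : ∀ β : Fin p → ℝ,
      Qls n p x y βhat + lam / n * l1 βhat ≤ Qls n p x y β + lam / n * l1 β) :
    (⨆ j, |βhat j - β0 j|) ≤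
      lam / n * ((U + cbar) / (U - 5 * cbar)) + min (σ / Real.sqrt n) cs +
        6 * cbar / (U - 5 * cbar) * (cs / Real.sqrt s) +
        4 * cbar / U * (n / lam) * (cs ^ 2 / s) := by
  classical
  haveI : Nonempty (Fin p) := Fin.pos_iff_nonempty.mp hp
  have hn' : (0:ℝ) < n := by exact_mod_cast hn
  have hs0 : (0:ℝ) < (s:ℝ) := by exact_mod_cast hs1
  have hc0 : (0:ℝ) < c := by linarith
  have hc1 : (0:ℝ) < c - 1 := by linarith
  have hcb1 : 1 < cbar := by
    rw [hcbar, lt_div_iff₀ hc1]; linarith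
  have hcb0 : (0:ℝ) < cbar := by linarith
  have hcbc : cbar * (c - 1) = c + 1 := by rw [hcbar]; field_simp
  have hU0 : (0:ℝ) < U := by linarith
  have hU5 : (0:ℝ) < U - 5*cbar := by linarith
  have hU1 : (0:ℝ) < U - 1 - cbar := by linarith
  set δ : Fin p → ℝ := fun j => βhat j - β0 j with hδ
  set r : Fin n → ℝ := fun i => f i - ∑ k, x i k * β0 k with hrdef
  set v : Fin n → ℝ := fun i => ∑ k, x i k * δ k with hv
  set a : Fin p → ℝ := fun j => (n:ℝ)⁻¹ * ∑ i, r i * x i j with ha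
  set u : Fin n → ℝ := fun i => y i - ∑ k, x i k * β0 k with hu
  have hQ0r : (n : ℝ)⁻¹ * ∑ i, (f i - ∑ j, x i j * β0 j) ^ 2 = (n:ℝ)⁻¹ * ∑ i, r i ^2 := rfl
  set Q0 : ℝ := (n:ℝ)⁻¹ * ∑ i, r i ^2 with hQ0def
  rw [hQ0r] at hcs hβ0
  have hQ0 : 0 ≤ Q0 := by rw [hQ0def]; positivity
  have hcs0 : 0 ≤ cs := by rw [hcs]; exact Real.sqrt_nonneg _
  have hcs2 : cs^2 = Q0 := by rw [hcs]; exact Real.sq_sqrt hQ0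
  -- β0 vanishes off T
  have hb0 : ∀ j, j ∉ T → β0 j = 0 := by
    intro j hj; rw [hT] at hj; simpa [suppF] using hj
  -- a vanishes on T
  have haT : ∀ j ∈ T, a j = 0 := by
    intro j hj
    have hsupp : (suppF (fun k => β0 k + if k = j then (a j) else 0)).card ≤ s := by
      refine le_trans (Finset.card_le_card ?_) (le_of_eq hcard)
      intro k hk
      simp only [suppF, Finset.mem_filter, Finset.mem_univ, true_and] at hk
      by_contra hkT
      have h0 : β0 k = 0 := hb0 k hkT
      have hkj : k ≠ j := fun h => hkT (h ▸ hj)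
      simp [h0, hkj] at hk
    have h := hβ0 _ hsupp
    rw [Q_update n p x f β0 j (a j) (hx j)] at h
    have haj : (n:ℝ)⁻¹ * ∑ i, (f i - ∑ k, x i k * β0 k) * x i j = a j := rfl
    rw [haj] at h
    have h2 : (a j)^2 = 0 := le_antisymm (by nlinarith) (sq_nonneg _)
    exact sq_eq_zero_iff.mp h2
  -- |a j| ≤ σ/√n
  have haσ : ∀ j, |a j| ≤ σ / Real.sqrt n := by
    intro j
    have hbdd : BddBelow {r' : ℝ | ∃ β : Fin p → ℝ, (suppF β).card ≤ s + 1 ∧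
        r' = (n : ℝ)⁻¹ * ∑ i, (f i - ∑ k, x i k * β k) ^ 2} := by
      refine ⟨0, ?_⟩
      rintro r' ⟨β, -, rfl⟩
      positivity
    have hck2s : ck2 s = Q0 := by
      rw [hck2 s]
      apply le_antisymm
      · refine csInf_le ⟨0, ?_⟩ ⟨β0, hβ0s, rfl⟩
        rintro r' ⟨β, -, rfl⟩
        positivity
      · refine le_csInf ⟨Q0, β0, hβ0s, rfl⟩ ?_
        rintro r' ⟨β, hβ, rfl⟩
        exact hβ0 β hβ
    have hsupp : (suppF (fun k => β0 k + if k = j then (a j) else 0)).card ≤ s + 1 := by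
      refine le_trans (Finset.card_le_card (show _ ⊆ insert j T from ?_)) ?_
      · intro k hk
        simp only [suppF, Finset.mem_filter, Finset.mem_univ, true_and] at hk
        by_contra hkT
        simp only [Finset.mem_insert, not_or] at hkT
        obtain ⟨hkj, hkT⟩ := hkT
        have h0 : β0 k = 0 := hb0 k hkT
        simp [h0, hkj] at hk
      · calc (insert j T).card ≤ T.card + 1 := Finset.card_insert_le _ _
          _ = s + 1 := by rw [hcard]
    have hval : ck2 (s+1) ≤ Q0 - (a j)^2 := by
      rw [hck2 (s+1)]
      refine csInf_le hbdd ⟨_, hsupp, ?_⟩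
      rw [Q_update n p x f β0 j (a j) (hx j)]
      have haj : (n:ℝ)⁻¹ * ∑ i, (f i - ∑ k, x i k * β0 k) * x i j = a j := rfl
      rw [haj]
      ring
    have hopt := hsopt (s+1) (by omega)
    rw [hck2s] at hopt
    have hsq : (a j)^2 ≤ σ^2 / n := by
      have hcast : ((s+1 : ℕ) : ℝ) = (s : ℝ) + 1 := by push_cast; ring
      rw [hcast] at hopt
      have := le_trans hopt (by linarith [hval] :
        ck2 (s+1) + σ^2 * ((s:ℝ)+1) / n ≤ Q0 - (a j)^2 + σ^2 * ((s:ℝ)+1) / n)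
      have hexp : σ^2 * ((s:ℝ)+1) / n = σ^2 * s / n + σ^2/n := by ring
      linarith [this, hexp.le, hexp.ge]
    have hσn : σ / Real.sqrt n = Real.sqrt (σ^2 / n) := by
      rw [Real.sqrt_div (sq_nonneg σ), Real.sqrt_sq hσ.le]
    rw [show |a j| = Real.sqrt ((a j)^2) from (Real.sqrt_sq_eq_abs _).symm, hσn]
    exact Real.sqrt_le_sqrt hsq
  -- |a j| ≤ cs
  have hacs : ∀ j, |a j| ≤ cs := by
    intro j
    have h := mean_cs n r (fun i => x i j)
    have hx1 : Real.sqrt ((n:ℝ)⁻¹ * ∑ i, (x i j)^2) = 1 := by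
      rw [hx j]; exact Real.sqrt_one
    calc |a j| = |(n:ℝ)⁻¹ * ∑ i, r i * x i j| := rfl
      _ ≤ Real.sqrt ((n:ℝ)⁻¹ * ∑ i, r i^2) * Real.sqrt ((n:ℝ)⁻¹ * ∑ i, (x i j)^2) := h
      _ = cs := by rw [hx1, hcs]; ring
  -- KKT
  have hkkt : ∀ j, |(n:ℝ)⁻¹ * ∑ i, (y i - ∑ k, x i k * βhat k) * x i j| ≤ lam/(2*n) :=
    fun j => kkt n p hn x y hx lam hlam βhat hβhat j
  -- sup norm of S bound
  have hSb : ∀ j, |S j| ≤ lam/(c*n) := by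
    intro j
    have h1 : |S j| ≤ supNorm S :=
      le_ciSup (Set.Finite.bddAbove (Set.finite_range (fun j => |S j|))) j
    have h2 : supNorm S ≤ lam/(c*n) := by
      rw [le_div_iff₀ (by positivity)]
      calc supNorm S * (c*n) = c*n*supNorm S := by ring
        _ ≤ lam := hlamS
    linarith
  have hShalf : ∀ j, (n:ℝ)⁻¹ * ∑ i, (y i - f i) * x i j = S j / 2 := by
    intro j
    rw [hS]
    field_simp
  -- decomposition
  have hdecomp : ∀ i, y i - ∑ k, x i k * βhat k = (y i - f i) + r i - v i := by
    intro i
    have h1 : v i = (∑ k, x i k * βhat k) - ∑ k, x i k * β0 k := by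
      show (∑ k, x i k * (βhat k - β0 k)) = _
      rw [← Finset.sum_sub_distrib]
      exact Finset.sum_congr rfl fun k _ => by ring
    have h2 : r i = f i - ∑ k, x i k * β0 k := rfl
    rw [h1, h2]; ring
  -- row expansion
  have hbrow : ∀ j, (n:ℝ)⁻¹ * ∑ i, x i j * v i
      = δ j + ∑ k ∈ Finset.univ.erase j, δ k * ((n:ℝ)⁻¹ * ∑ i, x i j * x i k) := by
    intro j
    have h1 : (n:ℝ)⁻¹ * ∑ i, x i j * v i
        = ∑ k, δ k * ((n:ℝ)⁻¹ * ∑ i, x i j * x i k) :=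
      mean_inner_swap n p x (fun i => x i j) δ
    rw [h1, ← Finset.add_sum_erase _ _ (Finset.mem_univ j)]
    congr 1
    have : (n:ℝ)⁻¹ * ∑ i, x i j * x i j = 1 := by
      rw [show (∑ i, x i j * x i j) = ∑ i, x i j ^2 from
        Finset.sum_congr rfl fun i _ => (sq (x i j)).symm]
      exact hx j
    rw [this, mul_one]
  have hGsplit : ∀ j, (n:ℝ)⁻¹ * ∑ i, x i j * v i
      = S j / 2 + a j - (n:ℝ)⁻¹ * ∑ i, (y i - ∑ k, x i k * βhat k) * x i j := by
    intro j
    have h1 : ∀ i ∈ Finset.univ, x i j * v i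
        = (y i - f i) * x i j + r i * x i j - (y i - ∑ k, x i k * βhat k) * x i j := by
      intro i _
      rw [hdecomp i]; ring
    calc (n:ℝ)⁻¹ * ∑ i, x i j * v i
        = (n:ℝ)⁻¹ * ∑ i, ((y i - f i) * x i j + r i * x i j
            - (y i - ∑ k, x i k * βhat k) * x i j) := by
          rw [Finset.sum_congr rfl h1]
      _ = (n:ℝ)⁻¹ * ∑ i, (y i - f i) * x i j + (n:ℝ)⁻¹ * ∑ i, r i * x i j
            - (n:ℝ)⁻¹ * ∑ i, (y i - ∑ k, x i k * βhat k) * x i j := by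
          simp only [Finset.sum_sub_distrib, Finset.sum_add_distrib]
          ring
      _ = _ := by
          rw [hShalf j]
  -- off-diagonal bound both orders
  have hM : ∀ j k : Fin p, k ≠ j → |(n:ℝ)⁻¹ * ∑ i, x i j * x i k| ≤ 1/(U*s) := by
    intro j k hkj
    rcases lt_or_gt_of_ne hkj with h | h
    · have := horth k j h
      have hswap : (n:ℝ)⁻¹ * ∑ i, x i j * x i k = (n:ℝ)⁻¹ * ∑ i, x i k * x i j := by
        congr 1; exact Finset.sum_congr rfl fun i _ => by ring
      rw [hswap]; exact this
    · exact horth j k h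
  set L : ℝ := lam/(2*n) + lam/(2*c*n) with hL
  set l1t : ℝ := ∑ k, |δ k| with hl1t
  have hl1t0 : 0 ≤ l1t := by rw [hl1t]; positivity
  -- coordinate-wise bound
  have hcoord : ∀ j, |δ j| ≤ L + |a j| + l1t/(U*s) := by
    intro j
    set W : ℝ := ∑ k ∈ Finset.univ.erase j, δ k * ((n:ℝ)⁻¹ * ∑ i, x i j * x i k) with hW
    have heq : δ j = S j / 2 + a j
        - (n:ℝ)⁻¹ * ∑ i, (y i - ∑ k, x i k * βhat k) * x i j - W := by
      have h1 := hbrow j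
      have h2 := hGsplit j
      rw [h1] at h2
      linarith
    have hWb : |W| ≤ l1t/(U*s) := by
      calc |W| ≤ ∑ k ∈ Finset.univ.erase j, |δ k * ((n:ℝ)⁻¹ * ∑ i, x i j * x i k)| :=
            Finset.abs_sum_le_sum_abs _ _
        _ ≤ ∑ k ∈ Finset.univ.erase j, |δ k| * (1/(U*s)) := by
            refine Finset.sum_le_sum fun k hk => ?_
            rw [abs_mul]
            exact mul_le_mul_of_nonneg_left (hM j k (Finset.ne_of_mem_erase hk)) (abs_nonneg _)
        _ ≤ ∑ k, |δ k| * (1/(U*s)) := by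
            refine Finset.sum_le_sum_of_subset_of_nonneg (Finset.subset_univ _) fun k _ _ => ?_
            positivity
        _ = l1t/(U*s) := by rw [← Finset.sum_mul, ← hl1t]; ring
    have hab1 := hSb j
    have hab2 := hkkt j
    rw [abs_le] at hab1 hab2 hWb ⊢
    have haj1 := le_abs_self (a j)
    have haj2 := neg_abs_le (a j)
    constructor
    · rw [heq, hL]; obtain ⟨w1, w2⟩ := hWb; obtain ⟨s1, s2⟩ := hab1
      obtain ⟨g1, g2⟩ := hab2
      have : lam/(2*c*n) = lam/(c*n)/2 := by ring
      linarith
    · rw [heq, hL]; obtain ⟨w1, w2⟩ := hWb; obtain ⟨s1, s2⟩ := hab1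
      obtain ⟨g1, g2⟩ := hab2
      have : lam/(2*c*n) = lam/(c*n)/2 := by ring
      linarith
  set l1T : ℝ := ∑ j ∈ T, |δ j| with hl1T
  set l1Tc : ℝ := ∑ j ∈ Tᶜ, |δ j| with hl1Tc
  have hl1T0 : 0 ≤ l1T := by rw [hl1T]; positivity
  have hl1Tc0 : 0 ≤ l1Tc := by rw [hl1Tc]; positivity
  have hsplitt : l1T + l1Tc = l1t := by
    rw [hl1T, hl1Tc, hl1t]; exact Finset.sum_add_sum_compl T _
  -- sum of coordinate bounds over T
  have hbT : l1T ≤ s*L + l1t/U := by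
    have h1 : l1T ≤ ∑ j ∈ T, (L + |a j| + l1t/(U*s)) := by
      rw [hl1T]
      exact Finset.sum_le_sum fun j _ => hcoord j
    have h2 : ∑ j ∈ T, (L + |a j| + l1t/(U*s)) = s*L + l1t/U := by
      have ha0 : ∑ j ∈ T, |a j| = 0 :=
        Finset.sum_eq_zero fun j hj => by rw [haT j hj, abs_zero]
      rw [Finset.sum_add_distrib, Finset.sum_add_distrib, ha0, Finset.sum_const,
        Finset.sum_const, hcard]
      have : (s:ℝ) ≠ 0 := ne_of_gt hs0
      have hU0' : U ≠ 0 := ne_of_gt hU0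
      field_simp
      simp only [nsmul_eq_mul, add_zero]
      rw [mul_add, show U * ((s:ℝ) * (l1t / (U * s))) = l1t by field_simp]
      ring
    linarith
  -- basic inequality
  set K : ℝ := c*n*cs^2/(lam*(c-1)) with hK
  have hK0 : 0 ≤ K := by rw [hK]; positivity
  have hbasic : l1Tc ≤ cbar * l1T + K := by
    set P : ℝ := (n:ℝ)⁻¹ * ∑ i, v i ^2 with hP
    have hP0 : 0 ≤ P := by
      rw [hP]
      exact mul_nonneg (by positivity) (Finset.sum_nonneg fun i _ => sq_nonneg _)
    have hPs : Real.sqrt P ^ 2 = P := Real.sq_sqrt hP0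
    have hui : ∀ i, u i = (y i - f i) + r i := by
      intro i
      show y i - ∑ k, x i k * β0 k = (y i - f i) + (f i - ∑ k, x i k * β0 k)
      ring
    have hQdiff : Qls n p x y β0 - Qls n p x y βhat
        = 2*((n:ℝ)⁻¹ * ∑ i, u i * v i) - P := by
      have h1 : ∀ i ∈ Finset.univ, (y i - ∑ k, x i k * βhat k)^2 = (u i - 1 * v i)^2 := by
        intro i _
        rw [hdecomp i, hui i]; ring
      have h2 : Qls n p x y βhat
          = (n:ℝ)⁻¹ * (∑ i, u i^2 - 2*1*∑ i, u i * v i + 1^2 * ∑ i, v i^2) := by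
        show (n:ℝ)⁻¹ * ∑ i, (y i - ∑ k, x i k * βhat k)^2 = _
        rw [Finset.sum_congr rfl h1, sum_sq_expand u v 1]
      have h3 : Qls n p x y β0 = (n:ℝ)⁻¹ * ∑ i, u i^2 := rfl
      rw [h2, h3, hP]; ring
    have huv : (n:ℝ)⁻¹ * ∑ i, u i * v i
        = (∑ k, δ k * (S k/2)) + (n:ℝ)⁻¹ * ∑ i, r i * v i := by
      have h1 : ∀ i ∈ Finset.univ, u i * v i = (y i - f i) * v i + r i * v i := by
        intro i _
        rw [hui i]; ring
      rw [Finset.sum_congr rfl h1, Finset.sum_add_distrib, mul_add]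
      congr 1
      have h2 := mean_inner_swap n p x (fun i => y i - f i) δ
      rw [show ((n:ℝ)⁻¹ * ∑ i, (y i - f i) * v i)
          = (n:ℝ)⁻¹ * ∑ i, (y i - f i) * (∑ k, x i k * δ k) from rfl, h2]
      exact Finset.sum_congr rfl fun k _ => by rw [hShalf k]
    have hrv : (n:ℝ)⁻¹ * ∑ i, r i * v i ≤ cs * Real.sqrt P := by
      have h := mean_cs n r v
      have hr1 : Real.sqrt ((n:ℝ)⁻¹ * ∑ i, r i^2) = cs := by rw [hcs]
      calc (n:ℝ)⁻¹ * ∑ i, r i * v i ≤ |(n:ℝ)⁻¹ * ∑ i, r i * v i| := le_abs_self _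
        _ ≤ Real.sqrt ((n:ℝ)⁻¹ * ∑ i, r i^2) * Real.sqrt ((n:ℝ)⁻¹ * ∑ i, v i^2) := h
        _ = cs * Real.sqrt P := by rw [hr1]
    have hSd : ∑ k, δ k * (S k/2) ≤ lam/(c*n)/2 * l1t := by
      rw [hl1t, Finset.mul_sum]
      refine Finset.sum_le_sum fun k _ => ?_
      calc δ k * (S k/2) ≤ |δ k * (S k/2)| := le_abs_self _
        _ = |δ k| * (|S k|/2) := by rw [abs_mul, abs_div]; norm_num
        _ ≤ |δ k| * (lam/(c*n)/2) := by
            refine mul_le_mul_of_nonneg_left ?_ (abs_nonneg _)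
            linarith [hSb k]
        _ = lam/(c*n)/2 * |δ k| := mul_comm _ _
    have hl1c : l1Tc - l1T ≤ l1 βhat - l1 β0 := by
      have e1 : l1 βhat = (∑ j ∈ T, |βhat j|) + ∑ j ∈ Tᶜ, |βhat j| :=
        (Finset.sum_add_sum_compl T _).symm
      have e2 : l1 β0 = (∑ j ∈ T, |β0 j|) + ∑ j ∈ Tᶜ, |β0 j| :=
        (Finset.sum_add_sum_compl T _).symm
      have e3 : ∑ j ∈ Tᶜ, |β0 j| = 0 := Finset.sum_eq_zero fun j hj => by
        rw [hb0 j (Finset.mem_compl.mp hj), abs_zero]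
      have e4 : ∑ j ∈ Tᶜ, |βhat j| = l1Tc := by
        rw [hl1Tc]
        refine Finset.sum_congr rfl fun j hj => ?_
        rw [show δ j = βhat j - β0 j from rfl, hb0 j (Finset.mem_compl.mp hj), sub_zero]
      have e5 : (∑ j ∈ T, |β0 j|) - (∑ j ∈ T, |βhat j|) ≤ l1T := by
        rw [hl1T, ← Finset.sum_sub_distrib]
        refine Finset.sum_le_sum fun j _ => ?_
        calc |β0 j| - |βhat j| ≤ |β0 j - βhat j| := abs_sub_abs_le_abs_sub _ _
          _ = |δ j| := by rw [show δ j = βhat j - β0 j from rfl, abs_sub_comm]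
      linarith only [e1.le, e1.ge, e2.le, e2.ge, e3.le, e3.ge, e4.le, e4.ge, e5]
    have hβb := hβhat β0
    have key0 : lam/n*l1Tc ≤ lam/n*l1T + lam/(c*n)*l1t + cs^2 := by
      have h0 : lam/n*(l1 βhat - l1 β0) ≤ Qls n p x y β0 - Qls n p x y βhat := by
        have : lam/n*(l1 βhat - l1 β0) = lam / n * l1 βhat - lam / n * l1 β0 := by ring
        linarith only [hβb, this.le, this.ge]
      rw [hQdiff] at h0
      have h5 : 2*(cs*Real.sqrt P) - P ≤ cs^2 := by
        have h51 : 0 ≤ (Real.sqrt P - cs)^2 := sq_nonneg _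
        have h52 : (Real.sqrt P - cs)^2 = P - 2*(cs*Real.sqrt P) + cs^2 := by
          rw [sub_sq, hPs]; ring
        linarith only [h51, h52.le, h52.ge]
      have h6 : (n:ℝ)⁻¹ * ∑ i, u i * v i ≤ lam/(c*n)/2*l1t + cs*Real.sqrt P := by
        rw [huv]; exact add_le_add hSd hrv
      have h7 : lam/n*(l1Tc - l1T) ≤ lam/n*(l1 βhat - l1 β0) :=
        mul_le_mul_of_nonneg_left hl1c (by positivity)
      have h8 : lam/n*(l1Tc - l1T) = lam/n*l1Tc - lam/n*l1T := by ring
      linarith only [h0, h5, h6, h7, h8.le, h8.ge]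
    have hmul := mul_le_mul_of_nonneg_right key0
      (le_of_lt (show (0:ℝ) < c*n/lam by positivity))
    have e6 : (lam/n*l1Tc)*(c*n/lam) = c*l1Tc := by field_simp
    have e7 : (lam/n*l1T + lam/(c*n)*l1t + cs^2)*(c*n/lam)
        = c*l1T + l1t + c*n*cs^2/lam := by field_simp
    rw [e6, e7] at hmul
    have hfin : l1Tc ≤ ((c+1)*l1T + c*n*cs^2/lam)/(c-1) := by
      rw [le_div_iff₀ hc1]
      rw [← hsplitt] at hmul
      linarith only [hmul]
    have e8 : ((c+1)*l1T + c*n*cs^2/lam)/(c-1) = cbar*l1T + K := by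
      rw [hcbar, hK]; field_simp
    rw [e8] at hfin
    exact hfin
  clear_value δ r v a u Q0 L l1t l1T l1Tc K
  -- l1 bound
  have hl1bound : l1t ≤ U*((1+cbar)*((s:ℝ)*L) + K)/(U-1-cbar) := by
    have h2 := mul_le_mul_of_nonneg_left hbT (show (0:ℝ) ≤ 1+cbar by linarith)
    have hA : l1t ≤ (1+cbar)*((s:ℝ)*L) + (1+cbar)*(l1t/U) + K := by
      have e0 : (1+cbar)*((s:ℝ)*L + l1t/U) = (1+cbar)*((s:ℝ)*L) + (1+cbar)*(l1t/U) := by ring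
      linarith only [hsplitt.le, hsplitt.ge, hbasic, h2, e0.le, e0.ge]
    have h3 := mul_le_mul_of_nonneg_right hA hU0.le
    have e2 : ((1+cbar)*((s:ℝ)*L) + (1+cbar)*(l1t/U) + K)*U
        = U*((1+cbar)*((s:ℝ)*L) + K) + (1+cbar)*l1t := by
      field_simp
      ring
    rw [le_div_iff₀ hU1]
    linarith only [h3, e2.le, e2.ge]
  -- conclusion
  -- arithmetic comparisons
  have hLf : L = lam/n*((c+1)/(2*c)) := by
    rw [hL]; field_simp
  have hq2 : U*(U-5*cbar) ≤ (U+cbar)*(U-1-cbar) := by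
    have hA2 : 5*cbar^2 < cbar*U := by nlinarith [mul_lt_mul_of_pos_left hU hcb0]
    have hB2 : U < cbar*U := by nlinarith [mul_lt_mul_of_pos_right hcb1 hU0]
    have hcc : cbar ≤ cbar^2 := by nlinarith [mul_le_mul_of_nonneg_left hcb1.le hcb0.le]
    nlinarith [hA2, hB2, hcc]
  have hiL : L + (1+cbar)*L/(U-1-cbar) ≤ lam/n*((U+cbar)/(U-5*cbar)) := by
    have e : L + (1+cbar)*L/(U-1-cbar) = L*U/(U-1-cbar) := by
      field_simp
      ring
    have hq1 : (c+1)/(2*c) ≤ 1 := by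
      rw [div_le_one (by positivity)]; linarith
    have key1 : L*U*(U-5*cbar) ≤ lam/n*(U+cbar)*(U-1-cbar) := by
      have hm := mul_le_mul hq1 hq2 (mul_nonneg hU0.le hU5.le) zero_le_one
      have hm2 := mul_le_mul_of_nonneg_left hm (show (0:ℝ) ≤ lam/n by positivity)
      calc L*U*(U-5*cbar) = lam/n*((c+1)/(2*c)*(U*(U-5*cbar))) := by rw [hLf]; ring
        _ ≤ lam/n*(1*((U+cbar)*(U-1-cbar))) := hm2
        _ = lam/n*(U+cbar)*(U-1-cbar) := by ring
    have e2 : lam/n*((U+cbar)/(U-5*cbar)) = (lam/n*(U+cbar))/(U-5*cbar) := by ring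
    rw [e, e2, div_le_div_iff₀ hU1 hU5]
    exact key1
  have hiK : K/((U-1-cbar)*(s:ℝ)) ≤ 4*cbar/U*(n/lam)*(cs^2/(s:ℝ)) := by
    have hKval : K/((U-1-cbar)*(s:ℝ)) = (c*cs^2)*(n/lam)/((c-1)*(U-1-cbar)*(s:ℝ)) := by
      rw [hK]; field_simp
    have hRval : 4*cbar/U*(n/lam)*(cs^2/(s:ℝ)) = (4*cbar*cs^2)*(n/lam)/(U*(s:ℝ)) := by
      field_simp
    rw [hKval, hRval, div_le_div_iff₀ (by positivity) (by positivity)]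
    have h3U : (0:ℝ) < 3*U - 4 - 4*cbar := by linarith
    have e3 : 4*cbar*((c-1)*(U-1-cbar)) = 4*(c+1)*(U-1-cbar) := by
      rw [← hcbc]; ring
    have base : c*U ≤ 4*cbar*((c-1)*(U-1-cbar)) := by
      rw [e3]
      nlinarith [mul_pos hc0 h3U, hU1]
    calc (c*cs^2)*(n/lam)*(U*(s:ℝ)) = (c*U)*(cs^2*(n/lam)*(s:ℝ)) := by ring
      _ ≤ (4*cbar*((c-1)*(U-1-cbar)))*(cs^2*(n/lam)*(s:ℝ)) :=
          mul_le_mul_of_nonneg_right base (by positivity)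
      _ = (4*cbar*cs^2)*(n/lam)*((c-1)*(U-1-cbar)*(s:ℝ)) := by ring
  have hiT3 : (0:ℝ) ≤ 6 * cbar / (U - 5 * cbar) * (cs / Real.sqrt s) :=
    mul_nonneg (div_nonneg (by linarith) hU5.le)
      (div_nonneg hcs0 (Real.sqrt_nonneg _))
  have hsplit2 : l1t/(U*(s:ℝ)) ≤ (1+cbar)*L/(U-1-cbar) + K/((U-1-cbar)*(s:ℝ)) := by
    have hpos : (0:ℝ) < U*(s:ℝ) := mul_pos hU0 hs0
    have h1 : l1t/(U*(s:ℝ)) ≤ (U*((1+cbar)*((s:ℝ)*L) + K)/(U-1-cbar))/(U*(s:ℝ)) :=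
      (div_le_div_iff_of_pos_right hpos).mpr hl1bound
    have h2 : (U*((1+cbar)*((s:ℝ)*L) + K)/(U-1-cbar))/(U*(s:ℝ))
        = (1+cbar)*L/(U-1-cbar) + K/((U-1-cbar)*(s:ℝ)) := by
      field_simp
    rw [h2] at h1
    exact h1
  have hfinal : ∀ j : Fin p, |βhat j - β0 j| ≤
      lam / n * ((U + cbar) / (U - 5 * cbar)) + min (σ / Real.sqrt n) cs +
        6 * cbar / (U - 5 * cbar) * (cs / Real.sqrt s) +
        4 * cbar / U * (n / lam) * (cs ^ 2 / s) := by
    intro j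
    have ham : |a j| ≤ min (σ / Real.sqrt n) cs := le_min (haσ j) (hacs j)
    have h1 : |βhat j - β0 j| ≤ L + |a j| + l1t/(U*(s:ℝ)) := by
      have h0 := hcoord j
      rw [hδ] at h0
      exact h0
    linarith only [h1, ham, hsplit2, hiL, hiK, hiT3]
  exact ciSup_le hfinal
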